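/- (Proposition 4.6: η'₂ is unfaithful.) Let n ≥ 3 and f, w, y, v ∈ ℂ with f ≠ 0, v ≠ 0, and w² − f²·y² ≠ 0, and let ρ : VST_n → GL_n(ℂ) be the group homomorphism with ρ(s_i) = L_i(!![0, f; f⁻¹, 0]), ρ(τ_i) = L_i(!![w, f²·y; y, w]), ρ(ν_i) = L_i(!![0, v; v⁻¹, 0]) for all 1 ≤ i ≤ n−1. Then ρ is not injective: there exists g ∈ VST_n with g ≠ 1 and ρ(g) = 1 (for instance g = (s₁ s₂)³, which is nontrivial in VST_n but satisfies ρ((s₁s₂)³) = 1). -/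

import Mathlib

set_option maxHeartbeats 4000000
set_option maxRecDepth 20000


/-- Generator type for the virtual singular twin group `VST_n`:
three copies of `Fin (n-1)`, for the generators `s_i`, `τ_i`, `ν_i`. -/
abbrev VSTGen (n : ℕ) := Fin (n - 1) ⊕ Fin (n - 1) ⊕ Fin (n - 1)

def vstS (n : ℕ) (i : Fin (n - 1)) : FreeGroup (VSTGen n) := FreeGroup.of (Sum.inl i)
def vstT (n : ℕ) (i : Fin (n - 1)) : FreeGroup (VSTGen n) := FreeGroup.of (Sum.inr (Sum.inl i))
def vstN (n : ℕ) (i : Fin (n - 1)) : FreeGroup (VSTGen n) := FreeGroup.of (Sum.inr (Sum.inr i))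

def vstAdj {n : ℕ} (i j : Fin (n - 1)) : Prop := i.val + 1 = j.val ∨ j.val + 1 = i.val
def vstFar {n : ℕ} (i j : Fin (n - 1)) : Prop := i.val + 2 ≤ j.val ∨ j.val + 2 ≤ i.val

/-- The defining relations of the virtual singular twin group `VST_n`. -/
def vstRels (n : ℕ) : Set (FreeGroup (VSTGen n)) :=
  {r | (∃ i, r = vstS n i * vstS n i) ∨
       (∃ i, r = vstN n i * vstN n i) ∨
       (∃ i, r = vstT n i * vstS n i * (vstS n i * vstT n i)⁻¹) ∨
       (∃ i j, vstAdj i j ∧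
          r = vstS n i * vstS n j * vstT n i * (vstT n j * vstS n i * vstS n j)⁻¹) ∨
       (∃ i j, vstAdj i j ∧
          r = vstN n i * vstN n j * vstN n i * (vstN n j * vstN n i * vstN n j)⁻¹) ∨
       (∃ i j, vstAdj i j ∧
          r = vstN n i * vstS n j * vstN n i * (vstN n j * vstS n i * vstN n j)⁻¹) ∨
       (∃ i j, vstAdj i j ∧
          r = vstN n i * vstT n j * vstN n i * (vstN n j * vstT n i * vstN n j)⁻¹) ∨
       (∃ i j, vstFar i j ∧
          ∃ g ∈ ({vstS n, vstT n, vstN n} : Set (Fin (n - 1) → FreeGroup (VSTGen n))),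
          ∃ h ∈ ({vstS n, vstT n, vstN n} : Set (Fin (n - 1) → FreeGroup (VSTGen n))),
            r = g i * h j * (h j * g i)⁻¹)}

/-- The virtual singular twin group `VST_n`. -/
abbrev VST (n : ℕ) := PresentedGroup (vstRels n)

/-- `Lmat n i M` is the `n × n` matrix agreeing with the identity outside rows and
columns `i, i+1` (0-indexed), with `2 × 2` block `M` there. -/
def Lmat {R : Type*} [Zero R] [One R] (n : ℕ) (i : ℕ) (M : Matrix (Fin 2) (Fin 2) R) :
    Matrix (Fin n) (Fin n) R :=
  Matrix.of fun a b =>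
    if a.val = i ∧ b.val = i then M 0 0
    else if a.val = i ∧ b.val = i + 1 then M 0 1
    else if a.val = i + 1 ∧ b.val = i then M 1 0
    else if a.val = i + 1 ∧ b.val = i + 1 then M 1 1
    else if a.val = b.val then 1 else 0


----------------------------------------------------------------
-- Auxiliary machinery
----------------------------------------------------------------

@[simp] lemma fin_val_mk {n m : ℕ} (h : m < n) : ((⟨m, h⟩ : Fin n) : ℕ) = m := rfl

open Matrix in
lemma Emul_apply {R : Type*} [CommRing R] {n : ℕ} (p q : Fin n) (c : R)
    (X : Matrix (Fin n) (Fin n) R) (a b : Fin n) :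
    (Matrix.single p q c * X) a b = if p = a then c * X q b else 0 := by
  by_cases h : p = a
  · subst h; simp
  · rw [if_neg h]
    exact Matrix.single_mul_apply_of_ne (c := c) p q a b (fun hh => h hh.symm) X

open Matrix in
lemma Lmat_decomp {R : Type*} [CommRing R] {n i : ℕ} (h : i + 1 < n) (M : Matrix (Fin 2) (Fin 2) R) :
    Lmat n i M = (1 : Matrix (Fin n) (Fin n) R)
      + Matrix.single ⟨i, by omega⟩ ⟨i, by omega⟩ (M 0 0 - 1)
      + Matrix.single ⟨i, by omega⟩ ⟨i+1, h⟩ (M 0 1)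
      + Matrix.single ⟨i+1, h⟩ ⟨i, by omega⟩ (M 1 0)
      + Matrix.single ⟨i+1, h⟩ ⟨i+1, h⟩ (M 1 1 - 1) := by
  ext a b
  simp only [Lmat, Matrix.add_apply, Matrix.single, Matrix.one_apply, Matrix.of_apply,
    Fin.mk.injEq, Fin.ext_iff]
  by_cases hai : (a:ℕ) = i <;> by_cases hbi : (b:ℕ) = i <;> by_cases hai1 : (a:ℕ) = i+1 <;>
    by_cases hbi1 : (b:ℕ) = i+1 <;> by_cases hab : (a:ℕ) = (b:ℕ) <;> simp_all
  all_goals try split_ifs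
  all_goals try ring
  all_goals try intro
  all_goals exfalso
  all_goals omega


lemma Lmat_mul_apply {R : Type*} [CommRing R] {n i : ℕ} (h : i + 1 < n)
    (M : Matrix (Fin 2) (Fin 2) R) (X : Matrix (Fin n) (Fin n) R) (a b : Fin n) :
    (Lmat n i M * X) a b =
      if (a:ℕ) = i then M 0 0 * X ⟨i, by omega⟩ b + M 0 1 * X ⟨i+1, h⟩ b
      else if (a:ℕ) = i + 1 then M 1 0 * X ⟨i, by omega⟩ b + M 1 1 * X ⟨i+1, h⟩ b
      else X a b := by
  rcases a with ⟨a, ha⟩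
  rw [Lmat_decomp h, add_mul, add_mul, add_mul, add_mul, one_mul]
  simp only [Matrix.add_apply, Emul_apply, Fin.ext_iff, fin_val_mk, Fin.mk.injEq]
  split_ifs
  all_goals subst_vars
  all_goals try ring
  all_goals (exfalso; omega)


lemma Lmat_apply {R : Type*} [Zero R] [One R] {n i : ℕ}
    (M : Matrix (Fin 2) (Fin 2) R) (a b : Fin n) :
    Lmat n i M a b =
      if a.val = i ∧ b.val = i then M 0 0
      else if a.val = i ∧ b.val = i + 1 then M 0 1
      else if a.val = i + 1 ∧ b.val = i then M 1 0
      else if a.val = i + 1 ∧ b.val = i + 1 then M 1 1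
      else if a.val = b.val then 1 else 0 := rfl

lemma Lmat_one {R : Type*} [CommRing R] {n i : ℕ} :
    Lmat n i (1 : Matrix (Fin 2) (Fin 2) R) = (1 : Matrix (Fin n) (Fin n) R) := by
  ext a b
  simp only [Lmat_apply, Matrix.one_apply, Fin.ext_iff]
  norm_num
  split_ifs
  all_goals try rfl
  all_goals (exfalso; omega)

lemma Lmat_mul {R : Type*} [CommRing R] {n i : ℕ} (h : i + 1 < n)
    (A B : Matrix (Fin 2) (Fin 2) R) :
    Lmat n i A * Lmat n i B = Lmat n i (A * B) := by
  have c1 : ¬(i + 1 = i) := by omega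
  have c2 : ¬(i = i + 1) := by omega
  ext a b
  rw [Lmat_mul_apply h]
  simp only [Lmat_apply, Matrix.mul_apply, Fin.sum_univ_two, fin_val_mk, c1, c2,
    eq_self_iff_true, true_and, false_and, and_true, and_false, if_true, if_false]
  split_ifs
  all_goals try ring
  all_goals (exfalso; omega)



def swapMat {R : Type*} [Zero R] [One R] : Matrix (Fin 2) (Fin 2) R := !![0, 1; 1, 0]

@[simp] lemma swapMat00 {R : Type*} [Zero R] [One R] : (swapMat : Matrix (Fin 2) (Fin 2) R) 0 0 = 0 := rfl
@[simp] lemma swapMat01 {R : Type*} [Zero R] [One R] : (swapMat : Matrix (Fin 2) (Fin 2) R) 0 1 = 1 := rfl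
@[simp] lemma swapMat10 {R : Type*} [Zero R] [One R] : (swapMat : Matrix (Fin 2) (Fin 2) R) 1 0 = 1 := rfl
@[simp] lemma swapMat11 {R : Type*} [Zero R] [One R] : (swapMat : Matrix (Fin 2) (Fin 2) R) 1 1 = 0 := rfl

lemma Lmat_nsn {R : Type*} [CommRing R] {n k : ℕ} (h : k + 2 < n)
    (M : Matrix (Fin 2) (Fin 2) R) :
    Lmat n k swapMat * Lmat n (k+1) M * Lmat n k swapMat
      = Lmat n (k+1) swapMat * Lmat n k M * Lmat n (k+1) swapMat := by
  have h1 : k + 1 < n := by omega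
  have h2 : (k + 1) + 1 < n := by omega
  have c1 : ¬(k = k + 1) := by omega
  have c2 : ¬(k + 1 = k) := by omega
  have c3 : ¬(k = k + 2) := by omega
  have c4 : ¬(k + 2 = k) := by omega
  have c5 : ¬(k + 1 = k + 2) := by omega
  have c6 : ¬(k + 2 = k + 1) := by omega
  have c7 : ¬(k + 1 + 1 = k) := by omega
  have c8 : ¬(k = k + 1 + 1) := by omega
  have c9 : ¬(k + 1 + 1 = k + 1) := by omega
  have c10 : ¬(k + 1 = k + 1 + 1) := by omega
  ext a b
  rw [mul_assoc, mul_assoc]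
  simp only [Lmat_mul_apply h1, Lmat_mul_apply h2, Lmat_apply, fin_val_mk,
    c1, c2, c3, c4, c5, c6, c7, c8, c9, c10,
    eq_self_iff_true, true_and, false_and, and_true, and_false, if_true, if_false,
    swapMat00, swapMat01, swapMat10, swapMat11]
  split_ifs
  all_goals try ring
  all_goals (exfalso; omega)


open Matrix in
lemma Lmat_far {R : Type*} [CommRing R] {n i j : ℕ} (h1 : i + 1 < n) (h2 : j + 1 < n)
    (hij : i + 2 ≤ j) (A B : Matrix (Fin 2) (Fin 2) R) :
    Lmat n i A * Lmat n j B = Lmat n j B * Lmat n i A := by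
  have hi : i < n := by omega
  have hj : j < n := by omega
  have e1 : (⟨i, hi⟩ : Fin n) ≠ ⟨j, hj⟩ := Fin.ne_of_val_ne (by simp; omega)
  have e2 : (⟨i, hi⟩ : Fin n) ≠ ⟨j+1, h2⟩ := Fin.ne_of_val_ne (by simp; omega)
  have e3 : (⟨i+1, h1⟩ : Fin n) ≠ ⟨j, hj⟩ := Fin.ne_of_val_ne (by simp; omega)
  have e4 : (⟨i+1, h1⟩ : Fin n) ≠ ⟨j+1, h2⟩ := Fin.ne_of_val_ne (by simp; omega)
  have z : ∀ (p q r s : Fin n), q ≠ r → ∀ (c d : R),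
      Matrix.single p q c * Matrix.single r s d = 0 :=
    fun p q r s hqr c d => Matrix.single_mul_single_of_ne (c := c) p q r hqr d
  rw [Lmat_decomp h1 A, Lmat_decomp h2 B]
  simp only [mul_add, add_mul, one_mul, mul_one,
    z _ _ _ _ e1, z _ _ _ _ e2, z _ _ _ _ e3, z _ _ _ _ e4,
    z _ _ _ _ e1.symm, z _ _ _ _ e2.symm, z _ _ _ _ e3.symm, z _ _ _ _ e4.symm,
    add_zero, zero_add]
  abel

def sInt : Matrix (Fin 2) (Fin 2) ℤ := !![1, 1; 0, -1]

@[simp] lemma sInt00 : sInt 0 0 = 1 := rfl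
@[simp] lemma sInt01 : sInt 0 1 = 1 := rfl
@[simp] lemma sInt10 : sInt 1 0 = 0 := rfl
@[simp] lemma sInt11 : sInt 1 1 = -1 := rfl

lemma sInt_sq : sInt * sInt = 1 := by
  ext i j
  fin_cases i <;> fin_cases j <;>
    simp [sInt, Matrix.mul_apply, Fin.sum_univ_two, Matrix.one_apply]

lemma swap_sq {R : Type*} [CommRing R] : (swapMat : Matrix (Fin 2) (Fin 2) R) * swapMat = 1 := by
  ext i j
  fin_cases i <;> fin_cases j <;>
    simp [swapMat, Matrix.mul_apply, Fin.sum_univ_two, Matrix.one_apply]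

lemma Lmat_invol {R : Type*} [CommRing R] {n k : ℕ} (h : k + 1 < n)
    {A : Matrix (Fin 2) (Fin 2) R} (hA : A * A = 1) :
    Lmat n k A * Lmat n k A = 1 := by
  rw [Lmat_mul h, hA, Lmat_one]

lemma cubeZ_entry {n : ℕ} (hn : 3 ≤ n) :
    ((Lmat n 0 sInt * Lmat n 1 sInt) ^ 3) ⟨1, by omega⟩ ⟨1, by omega⟩ = -1 := by
  have h0 : (0:ℕ) + 1 < n := by omega
  have h1 : (1:ℕ) + 1 < n := by omega
  have e3 : (Lmat n 0 sInt * Lmat n 1 sInt) ^ 3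
      = Lmat n 0 sInt * (Lmat n 1 sInt * (Lmat n 0 sInt * (Lmat n 1 sInt *
          (Lmat n 0 sInt * Lmat n 1 sInt)))) := by
    rw [pow_succ, pow_succ, pow_one]
    simp only [mul_assoc]
  rw [e3]
  simp only [Lmat_mul_apply h0, Lmat_mul_apply h1, Lmat_apply, fin_val_mk,
    sInt00, sInt01, sInt10, sInt11]
  norm_num

lemma cubeC {n : ℕ} (hn : 3 ≤ n) (f : ℂ) (hf : f ≠ 0) :
    (Lmat n 0 !![0, f; f⁻¹, 0] * Lmat n 1 !![0, f; f⁻¹, 0]) ^ 3 = 1 := by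
  have h0 : (0:ℕ) + 1 < n := by omega
  have h1 : (1:ℕ) + 1 < n := by omega
  have e00 : (!![0, f; f⁻¹, 0]) 0 0 = 0 := rfl
  have e01 : (!![0, f; f⁻¹, 0]) 0 1 = f := rfl
  have e10 : (!![0, f; f⁻¹, 0]) 1 0 = f⁻¹ := rfl
  have e11 : (!![0, f; f⁻¹, 0]) 1 1 = 0 := rfl
  have e3 : (Lmat n 0 !![0, f; f⁻¹, 0] * Lmat n 1 !![0, f; f⁻¹, 0]) ^ 3
      = Lmat n 0 !![0, f; f⁻¹, 0] * (Lmat n 1 !![0, f; f⁻¹, 0] * (Lmat n 0 !![0, f; f⁻¹, 0] *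
          (Lmat n 1 !![0, f; f⁻¹, 0] * (Lmat n 0 !![0, f; f⁻¹, 0] * Lmat n 1 !![0, f; f⁻¹, 0])))) := by
    rw [pow_succ, pow_succ, pow_one]
    simp only [mul_assoc]
  rw [e3]
  ext a b
  simp only [Lmat_mul_apply h0, Lmat_mul_apply h1, Lmat_apply, fin_val_mk,
    e00, e01, e10, e11, Matrix.one_apply, Fin.ext_iff]
  norm_num
  split_ifs
  all_goals try (exfalso; omega)
  all_goals field_simp

----------------------------------------------------------------
-- The integral representation used to show nontriviality
----------------------------------------------------------------

def genMat (n : ℕ) : VSTGen n → Matrix (Fin n) (Fin n) ℤ :=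
  Sum.elim (fun i => Lmat n i.val sInt)
    (Sum.elim (fun _ => 1) (fun i => Lmat n i.val swapMat))

lemma fin_succ_lt {n : ℕ} (i : Fin (n - 1)) : i.val + 1 < n := by
  have := i.isLt; omega

lemma genMat_invol (n : ℕ) (x : VSTGen n) : genMat n x * genMat n x = 1 := by
  rcases x with i | i | i
  · exact Lmat_invol (fin_succ_lt i) sInt_sq
  · simp [genMat]
  · exact Lmat_invol (fin_succ_lt i) swap_sq

def genU (n : ℕ) (x : VSTGen n) : (Matrix (Fin n) (Fin n) ℤ)ˣ :=
  ⟨genMat n x, genMat n x, genMat_invol n x, genMat_invol n x⟩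

lemma genU_tau (n : ℕ) (i : Fin (n - 1)) : genU n (Sum.inr (Sum.inl i)) = 1 :=
  Units.ext rfl

lemma genU_sq (n : ℕ) (x : VSTGen n) : genU n x * genU n x = 1 := by
  apply Units.ext
  rw [Units.val_mul, Units.val_one]
  exact genMat_invol n x

lemma comm_rel {G : Type*} [Group G] (a b : G) (h : a * b = b * a) :
    a * b * (b * a)⁻¹ = 1 := by rw [h]; group

lemma conj_rel {G : Type*} [Group G] (a b : G) (h : a = b) :
    a * b⁻¹ = 1 := by rw [h]; simp

lemma rels_mapped (n : ℕ) : ∀ r ∈ vstRels n, FreeGroup.lift (genU n) r = 1 := by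
  intro r hr
  rcases hr with ⟨i, rfl⟩ | ⟨i, rfl⟩ | ⟨i, rfl⟩ | ⟨i, j, hadj, rfl⟩ | ⟨i, j, hadj, rfl⟩ |
    ⟨i, j, hadj, rfl⟩ | ⟨i, j, hadj, rfl⟩ | ⟨i, j, hfar, g, hg, h, hh, rfl⟩
  · simp only [vstS, map_mul, FreeGroup.lift_apply_of]
    exact genU_sq n _
  · simp only [vstN, map_mul, FreeGroup.lift_apply_of]
    exact genU_sq n _
  · simp only [vstS, vstT, map_mul, map_inv, FreeGroup.lift_apply_of]
    apply conj_rel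
    rw [genU_tau, one_mul, mul_one]
  · -- s_i s_j τ_i = τ_j s_i s_j
    simp only [vstS, vstT, map_mul, map_inv, FreeGroup.lift_apply_of]
    apply conj_rel
    rw [genU_tau, genU_tau, one_mul, mul_one]
  · -- ν braid
    simp only [vstN, map_mul, map_inv, FreeGroup.lift_apply_of]
    apply conj_rel
    apply Units.ext
    simp only [Units.val_mul]
    show Lmat n i.val swapMat * Lmat n j.val swapMat * Lmat n i.val swapMat
        = Lmat n j.val swapMat * Lmat n i.val swapMat * Lmat n j.val swapMat
    rcases hadj with hij | hji
    · rw [← hij]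
      exact Lmat_nsn (by have := fin_succ_lt j; omega) swapMat
    · rw [← hji]
      exact (Lmat_nsn (by have := fin_succ_lt i; omega) swapMat).symm
  · -- ν_i s_j ν_i = ν_j s_i ν_j
    simp only [vstS, vstN, map_mul, map_inv, FreeGroup.lift_apply_of]
    apply conj_rel
    apply Units.ext
    simp only [Units.val_mul]
    show Lmat n i.val swapMat * Lmat n j.val sInt * Lmat n i.val swapMat
        = Lmat n j.val swapMat * Lmat n i.val sInt * Lmat n j.val swapMat
    rcases hadj with hij | hji
    · rw [← hij]
      exact Lmat_nsn (by have := fin_succ_lt j; omega) sInt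
    · rw [← hji]
      exact (Lmat_nsn (by have := fin_succ_lt i; omega) sInt).symm
  · -- ν_i τ_j ν_i = ν_j τ_i ν_j
    simp only [vstT, vstN, map_mul, map_inv, FreeGroup.lift_apply_of]
    apply conj_rel
    rw [genU_tau, genU_tau, mul_one, mul_one, genU_sq, genU_sq]
  · -- far commutation
    have hcomm : ∀ (x y : VSTGen n), (genU n x).val * (genU n y).val
        = (genU n y).val * (genU n x).val →
        FreeGroup.lift (genU n) (FreeGroup.of x * FreeGroup.of y *
          (FreeGroup.of y * FreeGroup.of x)⁻¹) = 1 := by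
      intro x y hxy
      simp only [map_mul, map_inv, FreeGroup.lift_apply_of]
      apply comm_rel
      exact Units.ext hxy
    have hfi : i.val + 1 < n := fin_succ_lt i
    have hfj : j.val + 1 < n := fin_succ_lt j
    have key : ∀ (A B : Matrix (Fin 2) (Fin 2) ℤ),
        Lmat n i.val A * Lmat n j.val B = Lmat n j.val B * Lmat n i.val A := by
      intro A B
      rcases hfar with hij | hji
      · exact Lmat_far hfi hfj hij A B
      · exact (Lmat_far hfj hfi hji B A).symm
    simp only [Set.mem_insert_iff, Set.mem_singleton_iff] at hg hh
    rcases hg with rfl | rfl | rfl <;> rcases hh with rfl | rfl | rfl <;>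
      simp only [vstS, vstT, vstN] <;>
      apply hcomm <;>
      simp only [genU, genMat, Sum.elim_inl, Sum.elim_inr] <;>
      first
        | exact key _ _
        | (rw [one_mul, mul_one])

noncomputable def vstPhi (n : ℕ) : VST n →* (Matrix (Fin n) (Fin n) ℤ)ˣ :=
  PresentedGroup.toGroup (rels_mapped n)

lemma cube_ne_one (n : ℕ) (hn : 3 ≤ n) :
    (PresentedGroup.of (rels := vstRels n) (Sum.inl (⟨0, (by omega : 0 + 0 < n - 1)⟩ : Fin (n - 1))) *
        PresentedGroup.of (Sum.inl (⟨1, (by omega : 0 + 1 < n - 1)⟩ : Fin (n - 1)))) ^ 3 ≠ 1 := by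
  intro hone
  have h1 := congrArg (vstPhi n) hone
  rw [map_pow, map_mul, map_one] at h1
  rw [vstPhi, PresentedGroup.toGroup.of, PresentedGroup.toGroup.of] at h1
  have h2 := congrArg Units.val h1
  rw [Units.val_pow_eq_pow_val, Units.val_mul, Units.val_one] at h2
  have h3 : ((genU n (Sum.inl (⟨0, (by omega : 0 + 0 < n-1)⟩ : Fin (n-1)))).val *
      (genU n (Sum.inl (⟨1, (by omega : 0 + 1 < n-1)⟩ : Fin (n-1)))).val)
      = Lmat n 0 sInt * Lmat n 1 sInt := rfl
  rw [h3] at h2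
  have h4 := congrFun (congrFun h2 ⟨1, by omega⟩) ⟨1, by omega⟩
  rw [cubeZ_entry hn] at h4
  simp [Matrix.one_apply] at h4


/-- (Proposition 4.6.) The representation `η'₂` of `VST_n` is unfaithful: the element
`(s₁ s₂)³` is nontrivial in `VST_n` but is mapped to the identity matrix. -/
theorem eta2_prime_unfaithful (n : ℕ) (hn : 3 ≤ n) (f w y v : ℂ)
    (hf : f ≠ 0) (hv : v ≠ 0) (hdet : w ^ 2 - f ^ 2 * y ^ 2 ≠ 0)
    (ρ : VST n →* Matrix.GeneralLinearGroup (Fin n) ℂ)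
    (hρs : ∀ i : Fin (n - 1),
      ((ρ (PresentedGroup.of (Sum.inl i)) : Matrix (Fin n) (Fin n) ℂ))
        = Lmat n i.val !![0, f; f⁻¹, 0])
    (hρτ : ∀ i : Fin (n - 1),
      ((ρ (PresentedGroup.of (Sum.inr (Sum.inl i))) : Matrix (Fin n) (Fin n) ℂ))
        = Lmat n i.val !![w, f ^ 2 * y; y, w])
    (hρν : ∀ i : Fin (n - 1),
      ((ρ (PresentedGroup.of (Sum.inr (Sum.inr i))) : Matrix (Fin n) (Fin n) ℂ))
        = Lmat n i.val !![0, v; v⁻¹, 0]) :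
    ¬ Function.Injective ρ ∧
    (PresentedGroup.of (rels := vstRels n) (Sum.inl (⟨0, by omega⟩ : Fin (n - 1))) *
        PresentedGroup.of (Sum.inl (⟨1, by omega⟩ : Fin (n - 1)))) ^ 3 ≠ 1 ∧
    ρ ((PresentedGroup.of (Sum.inl (⟨0, by omega⟩ : Fin (n - 1))) *
        PresentedGroup.of (Sum.inl (⟨1, by omega⟩ : Fin (n - 1)))) ^ 3) = 1 := by
  have hne := cube_ne_one n hn
  have hval : ρ ((PresentedGroup.of (rels := vstRels n) (Sum.inl (⟨0, by omega⟩ : Fin (n - 1))) *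
      PresentedGroup.of (Sum.inl (⟨1, by omega⟩ : Fin (n - 1)))) ^ 3) = 1 := by
    apply Units.ext
    rw [map_pow, map_mul]
    rw [Units.val_pow_eq_pow_val, Units.val_mul, Units.val_one]
    rw [hρs ⟨0, by omega⟩, hρs ⟨1, by omega⟩]
    exact cubeC hn f hf
  refine ⟨?_, hne, hval⟩
  intro hinj
  exact hne (hinj (hval.trans (map_one ρ).symm))
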